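/- Let Γ be an alphabet, # a letter not in Γ, k ∈ ℕ, and let u₁,…,u_k, v₁,…,v_k, w, w' be words over Γ. Let L₁ = { x₀·#·x₁·#·⋯·#·x_k : x₀·u₁·x₁ ⋯ u_k·x_k = w } and L₂ = { x₀·#·x₁·#·⋯·#·x_k : x₀·v₁·x₁ ⋯ v_k·x_k = w' } be the solution languages of the two sequential word equations (which share the same variable sequence x₀,…,x_k). Then the language L₁ ∩ L₂ over Γ ∪ {#} is recognized by a deterministic finite automaton with at most (k+1)·(min(|w|, |w'|)+1) states. -/

import Mathlib

/-- A deterministic finite automaton with a partial transition function. -/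
structure PartialDFA (α : Type*) (σ : Type*) where
  step : σ → α → Option σ
  start : σ
  accept : Set σ

namespace PartialDFA

/-- Evaluation of a partial DFA from an optional state (`none` meaning "stuck"). -/
def evalFrom {α σ : Type*} (M : PartialDFA α σ) : Option σ → List α → Option σ
  | s, [] => s
  | s, a :: as => M.evalFrom (s.bind fun q => M.step q a) as

/-- The language accepted by a partial DFA. -/
def accepts {α σ : Type*} (M : PartialDFA α σ) : Set (List α) :=
  { w | ∃ q ∈ M.accept, M.evalFrom (some M.start) w = some q }

end PartialDFA

/-- The word `x₀·#·x₁·#·⋯·#·x_k` over the alphabet `Option Γ`, where the separator `#`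
is the letter `none` and letters of `Γ` are embedded via `some`. -/
def hashJoin {Γ : Type*} {k : ℕ} (x : Fin (k + 1) → List Γ) : List (Option Γ) :=
  (x 0).map some ++ (List.finRange k).flatMap fun j => none :: (x j.succ).map some

/-- The solution language `{ x₀·#·x₁·#·⋯·#·x_k : x₀·u₁·x₁·u₂·x₂ ⋯ u_k·x_k = w }` of the
sequential word equation given by the constants `u₁,…,u_k` (here `u 0, …, u (k-1)`)
and `w`. -/
def eqnSolutions {Γ : Type*} {k : ℕ} (u : Fin k → List Γ) (w : List Γ) :
    Set (List (Option Γ)) :=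
  { s | ∃ x : Fin (k + 1) → List Γ, s = hashJoin x ∧
      x 0 ++ (List.finRange k).flatMap (fun j => u j ++ x j.succ) = w }

namespace PartialDFA

theorem evalFrom_none {α σ : Type*} (M : PartialDFA α σ) (l : List α) :
    M.evalFrom none l = none := by
  induction l with
  | nil => rfl
  | cons a as ih => simpa [evalFrom] using ih
theorem evalFrom_append {α σ : Type*} (M : PartialDFA α σ) (s : Option σ) (l₁ l₂ : List α) :
    M.evalFrom s (l₁ ++ l₂) = M.evalFrom (M.evalFrom s l₁) l₂ := by
  induction l₁ generalizing s with
  | nil => rfl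
  | cons a as ih => simp [evalFrom, ih]
theorem evalFrom_cons {α σ : Type*} (M : PartialDFA α σ) (q : σ) (a : α) (l : List α) :
    M.evalFrom (some q) (a :: l) = M.evalFrom (M.step q a) l := by
  simp [evalFrom]

end PartialDFA

open Classical

namespace SEq

def tlHash {Γ : Type} : List (List Γ) → List (Option Γ)
  | [] => []
  | y :: ys => none :: ((y.map some) ++ tlHash ys)

def tlCat {Γ : Type} (F : ℕ → List Γ) : ℕ → List (List Γ) → List Γ
  | _, [] => []
  | i, y :: ys => F i ++ y ++ tlCat F (i+1) ys

def Su {Γ : Type} (F : ℕ → List Γ) (i : ℕ) : ℕ := ∑ j ∈ Finset.range i, (F j).length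

theorem Su_succ {Γ : Type} (F : ℕ → List Γ) (i : ℕ) :
    Su F (i+1) = Su F i + (F i).length := Finset.sum_range_succ _ i

variable {Γ : Type} (U V : ℕ → List Γ) (w w' : List Γ) (K : ℕ)

noncomputable def mach :
    PartialDFA (Option Γ) (Fin (K+1) × Fin (min w.length w'.length + 1)) where
  step := fun q a =>
    match a with
    | some c =>
      if h : w[(q.2 : ℕ) + Su U (q.1 : ℕ)]? = some c ∧
             w'[(q.2 : ℕ) + Su V (q.1 : ℕ)]? = some c then
        some (q.1, ⟨(q.2 : ℕ) + 1, by
          obtain ⟨h1, h2⟩ := h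
          have b1 := (List.getElem?_eq_some_iff.mp h1).1
          have b2 := (List.getElem?_eq_some_iff.mp h2).1
          omega⟩)
      else none
    | none =>
      if h : (q.1 : ℕ) < K ∧ U (q.1 : ℕ) <+: w.drop ((q.2 : ℕ) + Su U (q.1 : ℕ)) ∧
             V (q.1 : ℕ) <+: w'.drop ((q.2 : ℕ) + Su V (q.1 : ℕ)) then
        some (⟨(q.1 : ℕ) + 1, by omega⟩, q.2)
      else none
  start := (0, 0)
  accept := { q | (q.1 : ℕ) = K ∧ (q.2 : ℕ) + Su U K = w.length ∧
      (q.2 : ℕ) + Su V K = w'.length }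

end SEq

namespace SEq
variable {Γ : Type} (U V : ℕ → List Γ) (w w' : List Γ) (K : ℕ)

theorem eval_block : ∀ (y : List Γ) (i p : ℕ) (hi : i < K + 1)
    (hp : p + y.length ≤ min w.length w'.length)
    (h1 : y <+: w.drop (p + Su U i)) (h2 : y <+: w'.drop (p + Su V i)),
    (mach U V w w' K).evalFrom (some (⟨i, hi⟩, ⟨p, by omega⟩)) (y.map some) =
      some (⟨i, hi⟩, ⟨p + y.length, by omega⟩) := by
  intro y
  induction y with
  | nil => intro i p hi hp h1 h2; simp [PartialDFA.evalFrom]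
  | cons c y ih =>
    intro i p hi hp h1 h2
    obtain ⟨t, ht⟩ := h1
    obtain ⟨t', ht'⟩ := h2
    have g1 : w[p + Su U i]? = some c := by
      have : w[(p + Su U i) + 0]? = (w.drop (p + Su U i))[0]? := List.getElem?_drop.symm
      simpa [← ht] using this
    have g2 : w'[p + Su V i]? = some c := by
      have : w'[(p + Su V i) + 0]? = (w'.drop (p + Su V i))[0]? := List.getElem?_drop.symm
      simpa [← ht'] using this
    rw [List.map_cons, PartialDFA.evalFrom_cons]
    have hstep : (mach U V w w' K).step (⟨i, hi⟩, ⟨p, by omega⟩) (some c) =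
        some (⟨i, hi⟩, ⟨p + 1, by
          have b1 := (List.getElem?_eq_some_iff.mp g1).1
          have b2 := (List.getElem?_eq_some_iff.mp g2).1
          omega⟩) := by
      simp only [mach]
      rw [dif_pos ⟨g1, g2⟩]
    rw [hstep]
    have e1 : y <+: w.drop ((p + 1) + Su U i) := by
      have : w.drop ((p + Su U i) + 1) = y ++ t := by
        have := congrArg (List.drop 1) ht
        simpa [List.drop_drop] using this.symm
      rw [show (p+1) + Su U i = (p + Su U i) + 1 by omega, this]
      exact ⟨t, rfl⟩
    have e2 : y <+: w'.drop ((p + 1) + Su V i) := by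
      have : w'.drop ((p + Su V i) + 1) = y ++ t' := by
        have := congrArg (List.drop 1) ht'
        simpa [List.drop_drop] using this.symm
      rw [show (p+1) + Su V i = (p + Su V i) + 1 by omega, this]
      exact ⟨t', rfl⟩
    have := ih i (p+1) hi (by simpa [Nat.add_assoc, Nat.add_comm 1] using hp) e1 e2
    rw [this]
    simp only [Option.some.injEq, Prod.mk.injEq, Fin.mk.injEq, List.length_cons]
    exact ⟨trivial, by omega⟩
end SEq

namespace SEq
variable {Γ : Type} (U V : ℕ → List Γ) (w w' : List Γ) (K : ℕ)

theorem eval_forward : ∀ (s : List (Option Γ)) (i p : ℕ) (hi : i < K + 1)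
    (hp : p < min w.length w'.length + 1) (q : _),
    (mach U V w w' K).evalFrom (some (⟨i, hi⟩, ⟨p, hp⟩)) s = some q →
    q ∈ (mach U V w w' K).accept →
    ∃ (y : List Γ) (ys : List (List Γ)), i + ys.length = K ∧
      s = y.map some ++ tlHash ys ∧
      w.drop (p + Su U i) = y ++ tlCat U i ys ∧
      w'.drop (p + Su V i) = y ++ tlCat V i ys := by
  intro s
  induction s with
  | nil =>
    intro i p hi hp q hev hacc
    simp [PartialDFA.evalFrom] at hev
    subst hev
    obtain ⟨hq1, hq2, hq3⟩ := hacc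
    simp at hq1 hq2 hq3
    subst hq1
    refine ⟨[], [], by simp, rfl, ?_, ?_⟩
    · simp [tlCat, List.drop_eq_nil_of_le]
      omega
    · simp [tlCat, List.drop_eq_nil_of_le]
      omega
  | cons a s ih =>
    intro i p hi hp q hev hacc
    rw [PartialDFA.evalFrom_cons] at hev
    match a with
    | some c =>
      by_cases h : w[p + Su U i]? = some c ∧ w'[p + Su V i]? = some c
      · have hstep : (mach U V w w' K).step (⟨i, hi⟩, ⟨p, hp⟩) (some c) =
            some (⟨i, hi⟩, ⟨p + 1, by
              have b1 := (List.getElem?_eq_some_iff.mp h.1).1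
              have b2 := (List.getElem?_eq_some_iff.mp h.2).1
              omega⟩) := by
          simp only [mach]
          rw [dif_pos h]
        rw [hstep] at hev
        obtain ⟨y, ys, hlen, hs, hw, hw'⟩ := ih i (p+1) hi (by
          have b1 := (List.getElem?_eq_some_iff.mp h.1).1
          have b2 := (List.getElem?_eq_some_iff.mp h.2).1
          omega) q hev hacc
        have b1 := (List.getElem?_eq_some_iff.mp h.1).1
        have b2 := (List.getElem?_eq_some_iff.mp h.2).1
        refine ⟨c :: y, ys, hlen, by simp [hs], ?_, ?_⟩
        · rw [List.drop_eq_getElem_cons b1, (List.getElem?_eq_some_iff.mp h.1).2]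
          rw [show p + Su U i + 1 = (p+1) + Su U i by omega, hw]
          simp
        · rw [List.drop_eq_getElem_cons b2, (List.getElem?_eq_some_iff.mp h.2).2]
          rw [show p + Su V i + 1 = (p+1) + Su V i by omega, hw']
          simp
      · have hstep : (mach U V w w' K).step (⟨i, hi⟩, ⟨p, hp⟩) (some c) = none := by
          simp only [mach]
          rw [dif_neg h]
        rw [hstep, PartialDFA.evalFrom_none] at hev
        exact absurd hev (by simp)
    | none =>
      by_cases h : i < K ∧ U i <+: w.drop (p + Su U i) ∧ V i <+: w'.drop (p + Su V i)
      · have hstep : (mach U V w w' K).step (⟨i, hi⟩, ⟨p, hp⟩) none =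
            some (⟨i + 1, by omega⟩, ⟨p, hp⟩) := by
          simp only [mach]
          rw [dif_pos h]
        rw [hstep] at hev
        obtain ⟨y, ys, hlen, hs, hw, hw'⟩ := ih (i+1) p (by omega) hp q hev hacc
        refine ⟨[], y :: ys, by simp; omega, by simp [hs, tlHash], ?_, ?_⟩
        · obtain ⟨t, ht⟩ := h.2.1
          have : w.drop (p + Su U (i+1)) = (w.drop (p + Su U i)).drop (U i).length := by
            rw [List.drop_drop, Su_succ]
            congr 1
            omega
          rw [this, ← ht, List.drop_left] at hw
          simp [tlCat, ← ht, ← hw]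
        · obtain ⟨t, ht⟩ := h.2.2
          have : w'.drop (p + Su V (i+1)) = (w'.drop (p + Su V i)).drop (V i).length := by
            rw [List.drop_drop, Su_succ]
            congr 1
            omega
          rw [this, ← ht, List.drop_left] at hw'
          simp [tlCat, ← ht, ← hw']
      · have hstep : (mach U V w w' K).step (⟨i, hi⟩, ⟨p, hp⟩) none = none := by
          simp only [mach]
          rw [dif_neg h]
        rw [hstep, PartialDFA.evalFrom_none] at hev
        exact absurd hev (by simp)
end SEq

namespace SEq
variable {Γ : Type} (U V : ℕ → List Γ) (w w' : List Γ) (K : ℕ)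

theorem eval_backward : ∀ (ys : List (List Γ)) (y : List Γ) (i p : ℕ)
    (hik : i + ys.length = K)
    (hpw : p + Su U i ≤ w.length) (hpw' : p + Su V i ≤ w'.length)
    (hw : w.drop (p + Su U i) = y ++ tlCat U i ys)
    (hw' : w'.drop (p + Su V i) = y ++ tlCat V i ys),
    ∃ q ∈ (mach U V w w' K).accept,
      (mach U V w w' K).evalFrom (some (⟨i, by omega⟩, ⟨p, by
        have := (List.length_drop : (w.drop (p + Su U i)).length = _)
        have := (List.length_drop : (w'.drop (p + Su V i)).length = _)
        omega⟩)) (y.map some ++ tlHash ys) = some q := by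
  intro ys
  induction ys with
  | nil =>
    intro y i p hik hpw hpw' hw hw'
    have hik' : i = K := by simpa using hik
    subst hik'
    have l1 : w.length - (p + Su U i) = y.length := by
      have := congrArg List.length hw
      simpa [tlCat] using this
    have l2 : w'.length - (p + Su V i) = y.length := by
      have := congrArg List.length hw'
      simpa [tlCat] using this
    refine ⟨(⟨i, by omega⟩, ⟨p + y.length, by omega⟩), ?_, ?_⟩
    · refine ⟨by simp, ?_, ?_⟩ <;> simp <;> omega
    · rw [tlHash]
      rw [List.append_nil]
      exact eval_block U V w w' _ y i p (by omega) (by omega)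
        (by rw [hw, tlCat, List.append_nil]) (by rw [hw', tlCat, List.append_nil])
  | cons z ys ih =>
    intro y i p hik hpw hpw' hw hw'
    have l1 : w.length - (p + Su U i) = y.length + (tlCat U i (z :: ys)).length := by
      have := congrArg List.length hw
      simpa using this
    have l2 : w'.length - (p + Su V i) = y.length + (tlCat V i (z :: ys)).length := by
      have := congrArg List.length hw'
      simpa using this
    rw [tlHash, PartialDFA.evalFrom_append]
    rw [eval_block U V w w' K y i p (by omega) (by omega) ⟨_, hw.symm⟩ ⟨_, hw'.symm⟩]
    -- the hash step
    have hd : w.drop ((p + y.length) + Su U i) = tlCat U i (z :: ys) := by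
      rw [show (p + y.length) + Su U i = (p + Su U i) + y.length by omega,
        ← List.drop_drop, hw, ← List.drop_left (l₁ := y) (l₂ := tlCat U i (z :: ys))]
      rw [List.drop_left]
    have hd' : w'.drop ((p + y.length) + Su V i) = tlCat V i (z :: ys) := by
      rw [show (p + y.length) + Su V i = (p + Su V i) + y.length by omega,
        ← List.drop_drop, hw', ← List.drop_left (l₁ := y) (l₂ := tlCat V i (z :: ys))]
      rw [List.drop_left]
    have hcond : i < K ∧ U i <+: w.drop ((p + y.length) + Su U i) ∧
        V i <+: w'.drop ((p + y.length) + Su V i) := by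
      refine ⟨by simp at hik; omega, ?_, ?_⟩
      · rw [hd, tlCat, List.append_assoc]
        exact List.prefix_append _ _
      · rw [hd', tlCat, List.append_assoc]
        exact List.prefix_append _ _
    rw [PartialDFA.evalFrom_cons]
    have hstep : (mach U V w w' K).step (⟨i, by omega⟩, ⟨p + y.length, by omega⟩) none =
        some (⟨i + 1, by omega⟩, ⟨p + y.length, by omega⟩) := by
      simp only [mach]
      rw [dif_pos hcond]
    rw [hstep]
    -- prepare IH
    have hlen1 : (U i).length + (z.length + (tlCat U (i+1) ys).length) =
        (tlCat U i (z :: ys)).length := by simp [tlCat]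
    have hw2 : w.drop ((p + y.length) + Su U (i+1)) = z ++ tlCat U (i+1) ys := by
      rw [Su_succ, show (p + y.length) + (Su U i + (U i).length) =
        ((p + y.length) + Su U i) + (U i).length by omega, ← List.drop_drop, hd, tlCat]
      rw [List.append_assoc, List.drop_left]
    have hw2' : w'.drop ((p + y.length) + Su V (i+1)) = z ++ tlCat V (i+1) ys := by
      rw [Su_succ, show (p + y.length) + (Su V i + (V i).length) =
        ((p + y.length) + Su V i) + (V i).length by omega, ← List.drop_drop, hd', tlCat]
      rw [List.append_assoc, List.drop_left]
    exact ih z (i+1) (p + y.length) (by simp at hik ⊢; omega)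
      (by rw [Su_succ]; simp [tlCat] at l1; omega)
      (by rw [Su_succ]; simp [tlCat] at l2; omega) hw2 hw2'
end SEq

namespace SEq
variable {Γ : Type}

theorem tlHash_ofFn : ∀ (n : ℕ) (g : Fin n → List Γ),
    tlHash (List.ofFn g) = (List.finRange n).flatMap (fun j => none :: (g j).map some) := by
  intro n
  induction n with
  | zero => intro g; simp [tlHash]
  | succ n ih =>
    intro g
    rw [List.ofFn_succ, List.finRange_succ, tlHash, List.flatMap_cons, ih]
    simp [List.flatMap_map, Function.comp]

theorem tlCat_ofFn (F : ℕ → List Γ) : ∀ (n : ℕ) (i : ℕ) (g : Fin n → List Γ),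
    tlCat F i (List.ofFn g) = (List.finRange n).flatMap (fun (j : Fin n) => F (i + (j : ℕ)) ++ g j) := by
  intro n
  induction n with
  | zero => intro i g; simp [tlCat]
  | succ n ih =>
    intro i g
    rw [List.ofFn_succ, List.finRange_succ, tlCat, List.flatMap_cons, ih]
    simp [List.flatMap_map, Function.comp]
    congr 1
    funext j
    congr 2
    omega

theorem ofFn_getD : ∀ (n : ℕ) (l : List (List Γ)), l.length = n →
    List.ofFn (fun j : Fin n => l.getD (j : ℕ) []) = l := by
  intro n
  induction n with
  | zero => intro l h; simp [List.length_eq_zero_iff.mp h]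
  | succ n ih =>
    intro l h
    match l with
    | a :: l =>
      rw [List.ofFn_succ]
      simp only [Fin.val_zero, List.getD_cons_zero, Fin.val_succ, List.getD_cons_succ]
      rw [ih l (by simpa using h)]

theorem prefix_inj : ∀ (a : List Γ) (b : List Γ) (r r' : List (Option Γ)),
    a.map some ++ none :: r = b.map some ++ none :: r' → a = b ∧ r = r' := by
  intro a
  induction a with
  | nil =>
    intro b r r' h
    match b with
    | [] => simpa using h
    | c :: b => simp at h
  | cons c a ih =>
    intro b r r' h
    match b with
    | [] => simp at h
    | d :: b =>
      simp only [List.map_cons, List.cons_append, List.cons.injEq, Option.some.injEq] at h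
      obtain ⟨rfl, h⟩ := h
      obtain ⟨rfl, rfl⟩ := ih b r r' h
      exact ⟨rfl, rfl⟩

theorem hash_decomp_inj : ∀ (ys ys' : List (List Γ)), ys.length = ys'.length →
    ∀ (y y' : List Γ), y.map some ++ tlHash ys = y'.map some ++ tlHash ys' →
      y = y' ∧ ys = ys' := by
  intro ys
  induction ys with
  | nil =>
    intro ys' hl y y' h
    match ys' with
    | [] =>
      simp [tlHash] at h
      exact ⟨List.map_injective_iff.mpr (fun _ _ => Option.some.inj) h, rfl⟩
  | cons z ys ih =>
    intro ys' hl y y' h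
    match ys' with
    | z' :: ys'' =>
      rw [tlHash, tlHash] at h
      obtain ⟨rfl, h2⟩ := prefix_inj _ _ _ _ h
      obtain ⟨rfl, rfl⟩ := ih ys'' (by simpa using hl) z z' h2
      exact ⟨rfl, rfl⟩

end SEq


/-- The intersection of solution languages of two sequential word equations over the same
variable sequence `x₀,…,x_k` is recognized by a (partial) deterministic finite automaton
with at most `(k+1)·(min(|w|, |w'|)+1)` states. -/
theorem eqnSolutions_inter_partialDFA {Γ : Type} (k : ℕ) (u v : Fin k → List Γ)
    (w w' : List Γ) :
    ∃ (σ : Type) (_ : Fintype σ) (M : PartialDFA (Option Γ) σ),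
      Fintype.card σ ≤ (k + 1) * (min w.length w'.length + 1) ∧
      M.accepts = eqnSolutions u w ∩ eqnSolutions v w' := by
  classical
  set U : ℕ → List Γ := fun j => if h : j < k then u ⟨j, h⟩ else [] with hU
  set V : ℕ → List Γ := fun j => if h : j < k then v ⟨j, h⟩ else [] with hV
  refine ⟨Fin (k+1) × Fin (min w.length w'.length + 1), inferInstance,
    SEq.mach U V w w' k, by simp, ?_⟩
  have hSu0 : SEq.Su U 0 = 0 := by simp [SEq.Su]
  have hSv0 : SEq.Su V 0 = 0 := by simp [SEq.Su]
  have hstart : (SEq.mach U V w w' k).start =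
      ((⟨0, by omega⟩ : Fin (k+1)), (⟨0, by omega⟩ : Fin (min w.length w'.length + 1))) := by
    simp only [SEq.mach]
    constructor
  -- key reformulations
  have hjoin : ∀ x : Fin (k+1) → List Γ,
      hashJoin x = (x 0).map some ++ SEq.tlHash (List.ofFn fun j : Fin k => x j.succ) := by
    intro x
    rw [hashJoin, SEq.tlHash_ofFn]
  have hcatU : ∀ x : Fin (k+1) → List Γ,
      SEq.tlCat U 0 (List.ofFn fun j : Fin k => x j.succ) =
        (List.finRange k).flatMap (fun j => u j ++ x j.succ) := by
    intro x
    rw [SEq.tlCat_ofFn]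
    congr 1
    funext j
    simp [hU, j.isLt]
  have hcatV : ∀ x : Fin (k+1) → List Γ,
      SEq.tlCat V 0 (List.ofFn fun j : Fin k => x j.succ) =
        (List.finRange k).flatMap (fun j => v j ++ x j.succ) := by
    intro x
    rw [SEq.tlCat_ofFn]
    congr 1
    funext j
    simp [hV, j.isLt]
  ext s
  constructor
  · rintro ⟨q, hacc, hev⟩
    rw [hstart] at hev
    obtain ⟨y, ys, hlen, hs, hw, hw'⟩ :=
      SEq.eval_forward U V w w' k s 0 0 (by omega) (by omega) q hev hacc
    rw [hSu0] at hw
    rw [hSv0] at hw'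
    simp only [Nat.add_zero, List.drop_zero] at hw hw'
    have hlen' : ys.length = k := by simpa using hlen
    set x : Fin (k+1) → List Γ := fun j => (y :: ys).getD (j : ℕ) [] with hx
    have hx0 : x 0 = y := rfl
    have hofn : (List.ofFn fun j : Fin k => x j.succ) = ys := by
      have : (fun j : Fin k => x j.succ) = fun j : Fin k => ys.getD (j : ℕ) [] := by
        funext j
        simp [hx]
      rw [this, SEq.ofFn_getD k ys hlen']
    have hsx : s = hashJoin x := by
      rw [hjoin x, hofn, hx0, hs]
    refine ⟨⟨x, hsx, ?_⟩, ⟨x, hsx, ?_⟩⟩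
    · rw [← hcatU x, hofn, hx0, ← hw]
    · rw [← hcatV x, hofn, hx0, ← hw']
  · rintro ⟨⟨x, hsx, hxu⟩, ⟨x', hsx', hxv⟩⟩
    -- x = x'
    have hxx : x = x' := by
      have h1 : (x 0).map some ++ SEq.tlHash (List.ofFn fun j : Fin k => x j.succ) =
          (x' 0).map some ++ SEq.tlHash (List.ofFn fun j : Fin k => x' j.succ) := by
        rw [← hjoin x, ← hjoin x', ← hsx, ← hsx']
      obtain ⟨h0, hrest⟩ := SEq.hash_decomp_inj _ _ (by simp) _ _ h1
      have hfun : (fun j : Fin k => x j.succ) = fun j : Fin k => x' j.succ :=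
        List.ofFn_injective hrest
      funext j
      rcases Fin.eq_zero_or_eq_succ j with rfl | ⟨j', rfl⟩
      · exact h0
      · exact congrFun hfun j'
    subst hxx
    obtain ⟨q, hq, hev⟩ := SEq.eval_backward U V w w' k
      (List.ofFn fun j : Fin k => x j.succ) (x 0) 0 0
      (by simp) (by simp [hSu0]) (by simp [hSv0])
      (by rw [hSu0]; simpa [hcatU x] using hxu.symm)
      (by rw [hSv0]; simpa [hcatV x] using hxv.symm)
    refine ⟨q, hq, ?_⟩
    rw [hstart, hsx, hjoin x]
    exact hev
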